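/- Let β be a symmetric m×m real matrix with no two equal rows (twin-free), and let φ: [1,m] → [1,m] satisfy β_{φ(i),φ(j)} = β_{i,j} for all i,j. Then some power γ = φˢ of φ (s ≥ 1) is idempotent (γ∘γ = γ), and this idempotent γ satisfies β_{γ(i),l} = β_{i,l} for all i,l; hence γ is the identity and φ is a permutation. -/
import Mathlib


open scoped BigOperators Classical

/-- A `k`-labeled graph: a finite multigraph (no loops) with `k` distinct
nodes labeled `1, …, k`. -/
structure KGraph (k : ℕ) where
  V : Type
  [fV : Fintype V]
  [dV : DecidableEq V]
  lab : Fin k → V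
  lab_inj : Function.Injective lab
  edges : Multiset (V × V)
  loopless : ∀ e ∈ edges, e.1 ≠ e.2

attribute [instance] KGraph.fV KGraph.dV

/-- The weighted partial homomorphism number `hom_φ(F, G)`, for a weighted graph `G`
on node set `W` with node weights `α` and edge weights `β`. -/
noncomputable def homPhi {k : ℕ} {W : Type} [Fintype W] [DecidableEq W]
    (α : W → ℝ) (β : W → W → ℝ) (F : KGraph k) (φ : Fin k → W) : ℝ :=
  ∑ ψ ∈ Finset.univ.filter (fun ψ : F.V → W => ψ ∘ F.lab = φ),
    ((∏ u, α (ψ u)) / ∏ i, α (φ i)) *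
      (F.edges.map (fun e => β (ψ e.1) (ψ e.2))).prod

/-- The full weighted homomorphism number `hom(F, G)` (labels ignored). -/
noncomputable def homT {k : ℕ} {W : Type} [Fintype W] [DecidableEq W]
    (α : W → ℝ) (β : W → W → ℝ) (F : KGraph k) : ℝ :=
  ∑ ψ : F.V → W, (∏ u, α (ψ u)) * (F.edges.map (fun e => β (ψ e.1) (ψ e.2))).prod

/-- Embedding of the vertices of `F₂` into the gluing product `F₁F₂`. -/
noncomputable def KGraph.emb {k : ℕ} (F₁ F₂ : KGraph k) (v : F₂.V) :
    F₁.V ⊕ {v : F₂.V // v ∉ Set.range F₂.lab} :=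
  if h : v ∈ Set.range F₂.lab then
    Sum.inl (F₁.lab ((Equiv.ofInjective F₂.lab F₂.lab_inj).symm ⟨v, h⟩))
  else Sum.inr ⟨v, h⟩

theorem KGraph.emb_inj {k : ℕ} (F₁ F₂ : KGraph k) :
    Function.Injective (KGraph.emb F₁ F₂) := by
  intro a b hab
  by_cases h1 : a ∈ Set.range F₂.lab <;> by_cases h2 : b ∈ Set.range F₂.lab
  · rw [KGraph.emb, dif_pos h1, KGraph.emb, dif_pos h2] at hab
    have h3 := F₁.lab_inj (Sum.inl.inj hab)
    have h4 := (Equiv.ofInjective F₂.lab F₂.lab_inj).symm.injective h3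
    simpa using congrArg Subtype.val h4
  · rw [KGraph.emb, dif_pos h1, KGraph.emb, dif_neg h2] at hab
    exact absurd hab (by simp)
  · rw [KGraph.emb, dif_neg h1, KGraph.emb, dif_pos h2] at hab
    exact absurd hab (by simp)
  · rw [KGraph.emb, dif_neg h1, KGraph.emb, dif_neg h2] at hab
    simpa using Sum.inr.inj hab

/-- The gluing product `F₁F₂` of two `k`-labeled graphs: take the disjoint union
and identify equally-labeled nodes. -/
noncomputable def glue {k : ℕ} (F₁ F₂ : KGraph k) : KGraph k where
  V := F₁.V ⊕ {v : F₂.V // v ∉ Set.range F₂.lab}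
  lab := fun i => Sum.inl (F₁.lab i)
  lab_inj := Sum.inl_injective.comp F₁.lab_inj
  edges := F₁.edges.map (fun e => (Sum.inl e.1, Sum.inl e.2)) +
    F₂.edges.map (fun e => (KGraph.emb F₁ F₂ e.1, KGraph.emb F₁ F₂ e.2))
  loopless := by
    intro e he
    simp only [Multiset.mem_add, Multiset.mem_map] at he
    rcases he with ⟨a, ha, rfl⟩ | ⟨a, ha, rfl⟩
    · simpa using F₁.loopless a ha
    · exact fun h => F₂.loopless a ha (KGraph.emb_inj F₁ F₂ h)

/-- `σ` is an automorphism of the weighted graph given by `(α, β)`. -/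
def IsAut {W : Type} (α : W → ℝ) (β : W → W → ℝ) (σ : Equiv.Perm W) : Prop :=
  (∀ v, α (σ v) = α v) ∧ ∀ u v, β (σ u) (σ v) = β u v

/-- The number of orbits of `Aut(G)` acting coordinatewise on `V(G)^k`. -/
noncomputable def orbCount {W : Type} [Fintype W] (α : W → ℝ) (β : W → W → ℝ)
    (k : ℕ) : ℕ :=
  Nat.card (Quot (fun φ ψ : Fin k → W =>
    ∃ σ : Equiv.Perm W, IsAut α β σ ∧ ψ = σ ∘ φ))

/-- some power `γ = φ^s` (`s ≥ 1`) of `φ` is idempotent; this idempotent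
satisfies `β_{γ(i),l} = β_{i,l}` for all `i, l`; hence `γ` is the identity and `φ` is a
permutation. -/
theorem idempotent_power_is_identity {m : ℕ} (β : Fin m → Fin m → ℝ)
    (hβ : ∀ i j, β i j = β j i)
    (htf : ∀ i j : Fin m, (∀ l, β i l = β j l) → i = j)
    (φ : Fin m → Fin m) (hφ : ∀ i j, β (φ i) (φ j) = β i j) :
    ∃ s : ℕ, 1 ≤ s ∧ (φ^[s]) ∘ (φ^[s]) = φ^[s] ∧
      (∀ i l, β (φ^[s] i) l = β i l) ∧ φ^[s] = id ∧ Function.Bijective φ := by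
  -- iterates preserve β
  have hit : ∀ n i j, β (φ^[n] i) (φ^[n] j) = β i j := by
    intro n
    induction n with
    | zero => simp
    | succ k ih =>
      intro i j
      rw [Function.iterate_succ_apply', Function.iterate_succ_apply', hφ]
      exact ih i j
  -- find a repeated iterate
  obtain ⟨a, b, hne, hab⟩ : ∃ a b : ℕ, a ≠ b ∧ φ^[a] = φ^[b] :=
    Finite.exists_ne_map_eq_of_infinite (fun n : ℕ => φ^[n])
  wlog hlt : a < b generalizing a b
  · exact this b a hne.symm hab.symm (hne.lt_or_gt.resolve_left hlt)
  set p := b - a with hp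
  have hp1 : 1 ≤ p := by omega
  have hstep : ∀ n, a ≤ n → φ^[n + p] = φ^[n] := by
    intro n hn
    have h1 : n + p = (n - a) + b := by omega
    have h2 : n = (n - a) + a := by omega
    rw [h1, Function.iterate_add, ← hab, ← Function.iterate_add, ← h2]
  have hmul : ∀ k n, a ≤ n → φ^[n + k * p] = φ^[n] := by
    intro k
    induction k with
    | zero => simp
    | succ j ih =>
      intro n hn
      have : n + (j + 1) * p = (n + p) + j * p := by ring
      rw [this, ih _ (by omega), hstep n hn]
  set s := p * (a + 1) with hs
  have hs1 : 1 ≤ s := Nat.one_le_iff_ne_zero.mpr (by positivity)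
  have hsa : a ≤ s := by
    calc a ≤ 1 * (a + 1) := by omega
    _ ≤ p * (a + 1) := by exact Nat.mul_le_mul_right _ hp1
  have hidem : (φ^[s]) ∘ (φ^[s]) = φ^[s] := by
    rw [← Function.iterate_add]
    have : s + s = s + (a + 1) * p := by rw [hs]; ring
    rw [this, hmul (a + 1) s hsa]
  have hidem' : ∀ i, φ^[s] (φ^[s] i) = φ^[s] i := fun i => congrFun hidem i
  have hkey : ∀ i l, β (φ^[s] i) l = β i l := by
    intro i l
    have h1 : β (φ^[s] (φ^[s] i)) (φ^[s] l) = β (φ^[s] i) l := hit s _ _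
    rw [hidem' i] at h1
    calc β (φ^[s] i) l = β (φ^[s] i) (φ^[s] l) := h1.symm
    _ = β i l := hit s i l
  have hid : φ^[s] = id := by
    funext i
    exact htf _ _ (hkey i)
  refine ⟨s, hs1, hidem, hkey, hid, ?_⟩
  clear_value s
  obtain ⟨t, rfl⟩ : ∃ t, s = t + 1 := ⟨s - 1, by omega⟩
  have h1 : φ ∘ φ^[t] = id := by
    rw [← Function.iterate_succ']; exact hid
  have h2 : φ^[t] ∘ φ = id := by
    rw [← Function.iterate_succ]; exact hid
  exact ⟨Function.LeftInverse.injective (congrFun h2),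
    Function.RightInverse.surjective (congrFun h1)⟩
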